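/- arXiv:1408.0995 — 6 statements merged into one kernel-verified Lean document; each statement's English description precedes it below -/
import Mathlib

section
/- If rationals α3, β3, α2, β2 satisfy α2 = α3^2 - β3 and 2β2 = β3^2 - 4α3, and (α3, β3) lies on the curve K1 given by 8x^8 - 32x^6 y + 40x^4 y^2 + 32x^5 - 16x^2 y^3 - 64x^3 y + y^4 + 24x y^2 + 24x^2 - 8y = 0, then (α2, β2 - 2α2^2) lies on the Heegner curve y^2 = 2x(x^3 - 1). -/
theorem stmt_7 (α3 β3 α2 β2 : ℚ)
    (h1 : α2 = α3^2 - β3) (h2 : 2*β2 = β3^2 - 4*α3)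
    (hK1 : 8*α3^8 - 32*α3^6*β3 + 40*α3^4*β3^2 + 32*α3^5 - 16*α3^2*β3^3
      - 64*α3^3*β3 + β3^4 + 24*α3*β3^2 + 24*α3^2 - 8*β3 = 0) :
    (β2 - 2*α2^2)^2 = 2*α2*(α2^3 - 1) := by
  subst h1
  linear_combination (1/4)*hK1 +
    ((β2 + (β3^2 - 4*α3)/2 - 4*(α3^2 - β3)^2)/2) * h2
end

section
/- If rationals a3, b3 satisfy the equation of the curve K3, i.e. 8a3^8 - 32a3^6 b3 + 40a3^4 b3^2 + 64a3^5 - 16a3^2 b3^3 - 128a3^3 b3 + b3^4 + 48a3 b3^2 + 96a3^2 - 32b3 - 24 = 0, and we set a2 = a3^2 - b3 and b2 = (b3^2 - 8a3)/2, then there exists a rational k with b2 = k(a2 - 1) + 2 satisfying the Pell-type relation (k/2 - (a2+1))^2 - 2((a2+1)/2)^2 = 1, provided a2 ≠ 1. -/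
theorem stmt_8 (a3 b3 : ℚ)
    (hK3 : 8*a3^8 - 32*a3^6*b3 + 40*a3^4*b3^2 + 64*a3^5 - 16*a3^2*b3^3
      - 128*a3^3*b3 + b3^4 + 48*a3*b3^2 + 96*a3^2 - 32*b3 - 24 = 0)
    (a2 b2 : ℚ) (ha2 : a2 = a3^2 - b3) (hb2 : b2 = (b3^2 - 8*a3)/2)
    (hne : a2 ≠ 1) :
    ∃ k : ℚ, b2 = k*(a2 - 1) + 2 ∧
      (k/2 - (a2 + 1))^2 - 2*((a2 + 1)/2)^2 = 1 := by
  have h : a2 - 1 ≠ 0 := sub_ne_zero.mpr hne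
  refine ⟨(b2 - 2)/(a2 - 1), by field_simp; ring, ?_⟩
  subst ha2 hb2
  field_simp
  linear_combination hK3
end

section
/- The points (-1, 8 + 2√17), (4 + √41, 40 + 6√41), (-10 - √89, 310 + 32√89) lie on the curve K3 defined by 8x^8 - 32x^6 y + 40x^4 y^2 + 64x^5 - 16x^2 y^3 - 128x^3 y + y^4 + 48x y^2 + 96x^2 - 32y - 24 = 0, where the coordinates are real numbers. -/
def K3 (x y : ℝ) : Prop :=
  8*x^8 - 32*x^6*y + 40*x^4*y^2 + 64*x^5 - 16*x^2*y^3 - 128*x^3*y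
    + y^4 + 48*x*y^2 + 96*x^2 - 32*y - 24 = 0

theorem stmt_12 :
    K3 (-1) (8 + 2*Real.sqrt 17) ∧
    K3 (4 + Real.sqrt 41) (40 + 6*Real.sqrt 41) ∧
    K3 (-10 - Real.sqrt 89) (310 + 32*Real.sqrt 89) := by
  have h17 : Real.sqrt 17 ^ 2 = 17 := Real.sq_sqrt (by norm_num)
  have h41 : Real.sqrt 41 ^ 2 = 41 := Real.sq_sqrt (by norm_num)
  have h89 : Real.sqrt 89 ^ 2 = 89 := Real.sq_sqrt (by norm_num)
  refine ⟨?_, ?_, ?_⟩ <;> unfold K3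
  · linear_combination (16*Real.sqrt 17^2 + 128*Real.sqrt 17 + 240) * h17
  · linear_combination (8*Real.sqrt 41^6 + 64*Real.sqrt 41^5 - 536*Real.sqrt 41^4
      - 6656*Real.sqrt 41^3 - 17096*Real.sqrt 41^2 + 9152*Real.sqrt 41 + 51544) * h41
  · linear_combination (8*Real.sqrt 89^6 - 384*Real.sqrt 89^5 - 7288*Real.sqrt 89^4
      + 190272*Real.sqrt 89^3 + 5081960*Real.sqrt 89^2 + 39395136*Real.sqrt 89
      + 102508296) * h89
end

section
/- Let (z,w) be a rational point on the curve w^2 = 2z(z^4 + 4z^3 - 2z^2 + 4z + 1) with z^4 + 4z^3 - 2z^2 - 12z + 1 ≠ 0. Define x = -(z^4 + 8z^3 + 2wz + 18z^2 + 6w - 3)/(z^4 + 4z^3 - 2z^2 - 12z + 1) and y = 2·P8(z,w)/(z^4 + 4z^3 - 2z^2 - 12z + 1)^2 where P8(z,w) = (2z^5 + 10z^4 + 36z^3 + 68z^2 + 10z - 30)w - z^8 + 60z^6 + 192z^5 + 82z^4 - 128z^3 + 172z^2 + 64z + 7. Then (x,y) lies on the curve K3: 8x^8 - 32x^6 y +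 40x^4 y^2 + 64x^5 - 16x^2 y^3 - 128x^3 y + y^4 + 48x y^2 + 96x^2 - 32y - 24 = 0. -/
set_option maxHeartbeats 4000000 in
theorem stmt_13 (z w : ℚ)
    (hKs : w^2 = 2*z*(z^4 + 4*z^3 - 2*z^2 + 4*z + 1))
    (hden : z^4 + 4*z^3 - 2*z^2 - 12*z + 1 ≠ 0)
    (x y : ℚ)
    (hx : x = -(z^4 + 8*z^3 + 2*w*z + 18*z^2 + 6*w - 3) /
      (z^4 + 4*z^3 - 2*z^2 - 12*z + 1))
    (hy : y = 2*((2*z^5 + 10*z^4 + 36*z^3 + 68*z^2 + 10*z - 30)*w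
      - z^8 + 60*z^6 + 192*z^5 + 82*z^4 - 128*z^3 + 172*z^2 + 64*z + 7) /
      (z^4 + 4*z^3 - 2*z^2 - 12*z + 1)^2) :
    8*x^8 - 32*x^6*y + 40*x^4*y^2 + 64*x^5 - 16*x^2*y^3 - 128*x^3*y
      + y^4 + 48*x*y^2 + 96*x^2 - 32*y - 24 = 0 := by
  rw [eq_div_iff hden] at hx
  rw [eq_div_iff (pow_ne_zero 2 hden)] at hy
  have key : (8)*(x * (z^4 + 4*z^3 - 2*z^2 - 12*z + 1))^8 + (-32)*(x * (z^4 + 4*z^3 - 2*z^2 - 12*z + 1))^6*(y * (z^4 + 4*z^3 - 2*z^2 - 12*z + 1)^2)^1 + (40)*(x * (z^4 + 4*z^3 - 2*z^2 - 12*z + 1))^4*(y * (z^4 + 4*z^3 - 2*z^2 - 12*z + 1)^2)^2 + (64)*(x * (z^4 + 4*z^3 - 2*z^2 - 12*z + 1))^5*(z^4 + 4*z^3 - 2*z^2 - 12*z + 1)^3 + (-16)*(x * (z^4 + 4*z^3 - 2*z^2 - 12*z + 1))^2*(y * (z^4 + 4*z^3 - 2*z^2 - 12*z + 1)^2)^3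 + (-128)*(x * (z^4 + 4*z^3 - 2*z^2 - 12*z + 1))^3*(y * (z^4 + 4*z^3 - 2*z^2 - 12*z + 1)^2)^1*(z^4 + 4*z^3 - 2*z^2 - 12*z + 1)^3 + (1)*(y * (z^4 + 4*z^3 - 2*z^2 - 12*z + 1)^2)^4 + (48)*(x * (z^4 + 4*z^3 - 2*z^2 - 12*z + 1))^1*(y * (z^4 + 4*z^3 - 2*z^2 - 12*z + 1)^2)^2*(z^4 + 4*z^3 - 2*z^2 - 12*z + 1)^3 + (96)*(x * (z^4 + 4*z^3 - 2*z^2 - 12*z + 1))^2*(z^4 + 4*z^3 - 2*z^2 - 12*z + 1)^6 + (-32)*(y * (z^4 + 4*z^3 - 2*z^2 - 12*z + 1)^2)^1*(z^4 + 4*z^3 - 2*z^2 - 12*z + 1)^6 + (-24)*(z^4 + 4*z^3 - 2*z^2 - 12*z + 1)^8 = 0 := by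
    rw [hx, hy]
    linear_combination ((512)*z^26 + (13312)*z^25 + (137728)*z^24 + (655360)*z^23 + (20480)*z^22*w^1 + (486400)*z^22 + (454656)*z^21*w^1 + (-11864064)*z^21 + (2560)*z^20*w^2 + (3944448)*z^20*w^1 + (-76837888)*z^20 + (65536)*z^19*w^2 + (15540224)*z^19*w^1 + (-260431872)*z^19 + (932864)*z^18*w^2 + (13266944)*z^18*w^1 + (-599857664)*z^18 + (8626176)*z^17*w^2 + (-129159168)*z^17*w^1 + (-1245529088)*z^17 + (65536)*z^16*w^3 + (49607168)*z^16*w^2 + (-637333504)*z^16*w^1 + (-3101204992)*z^16 + (1474560)*z^15*w^3 + (163446784)*z^15*w^2 + (-1773305856)*z^15*w^1 + (-6909296640)*z^15 + (4096)*z^14*w^4 + (14614528)*z^14*w^3 + (233590784)*z^14*w^2 + (-4156940288)*z^14*w^1 + (-8415606784)*z^14 + (102400)*z^13*w^4 + (83722240)*z^13*w^3 + (-186875904)*z^13*w^2 + (-7711694848)*z^13*w^1 + (-1685958656)*z^13 + (1454080)*z^12*w^4 + (310050816)*z^12*w^3 + (-927960064)*z^12*w^2 + (-8096653312)*z^12*w^1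 + (1585514496)*z^12 + (13737984)*z^11*w^4 + (812023808)*z^11*w^3 + (156106752)*z^11*w^2 + (-3466412032)*z^11*w^1 + (-12937478144)*z^11 + (49152)*z^10*w^5 + (86331392)*z^10*w^4 + (1695219712)*z^10*w^3 + (3036833792)*z^10*w^2 + (-8888524800)*z^10*w^1 + (-14411223552)*z^10 + (1081344)*z^9*w^5 + (360673280)*z^9*w^4 + (3086057472)*z^9*w^3 + (-478625792)*z^9*w^2 + (-28428804096)*z^9*w^1 + (18489535488)*z^9 + (2048)*z^8*w^6 + (10338304)*z^8*w^5 + (1001582592)*z^8*w^4 + (4321247232)*z^8*w^3 + (-13649685504)*z^8*w^2 + (-23743750144)*z^8*w^1 + (32426931712)*z^8 + (49152)*z^7*w^6 + (55967744)*z^7*w^5 + (1821032448)*z^7*w^4 + (2683797504)*z^7*w^3 + (-19583336448)*z^7*w^2 + (11720818688)*z^7*w^1 + (10626564096)*z^7 + (516096)*z^6*w^6 + (186875904)*z^6*w^5 + (2065772544)*z^6*w^4 + (-2994929664)*z^6*w^3 + (-9594384384)*z^6*w^2 + (23763783680)*z^6*w^1 + (-4587598848)*z^6 + (3096576)*z^5*w^6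 + (391053312)*z^5*w^5 + (1268477952)*z^5*w^4 + (-6694338560)*z^5*w^3 + (-849707008)*z^5*w^2 + (9322377216)*z^5*w^1 + (-6985205760)*z^5 + (11612160)*z^4*w^6 + (492797952)*z^4*w^5 + (131567616)*z^4*w^4 + (-3714514944)*z^4*w^3 + (1788871168)*z^4*w^2 + (1625026560)*z^4*w^1 + (-1906725888)*z^4 + (27869184)*z^3*w^6 + (329121792)*z^3*w^5 + (-469131264)*z^3*w^4 + (-406093824)*z^3*w^3 + (3408199680)*z^3*w^2 + (-1029365760)*z^3*w^1 + (-169009152)*z^3 + (41803776)*z^2*w^6 + (83607552)*z^2*w^5 + (-517902336)*z^2*w^4 + (-405209088)*z^2*w^3 + (971357184)*z^2*w^2 + (-547835904)*z^2*w^1 + (159427072)*z^2 + (35831808)*z^1*w^6 + (23887872)*z^1*w^5 + (-251817984)*z^1*w^4 + (-103514112)*z^1*w^3 + (282894336)*z^1*w^2 + (-129503232)*z^1*w^1 + (14263296)*z^1 + (13436928)*w^6 + (35831808)*w^5 + (-8957952)*w^4 + (-31850496)*w^3 + (21772800)*w^2 + (-4534272)*w^1 + (299520)) * hKs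
  have key2 : (8*x^8 - 32*x^6*y + 40*x^4*y^2 + 64*x^5 - 16*x^2*y^3 - 128*x^3*y
      + y^4 + 48*x*y^2 + 96*x^2 - 32*y - 24) * (z^4 + 4*z^3 - 2*z^2 - 12*z + 1)^8 = 0 := by
    linear_combination key
  exact (mul_eq_zero.mp key2).resolve_right (pow_ne_zero 8 hden)
end

section
/- If rationals α3, β3 satisfy the equation of the curve K1: 8α3^8 - 32α3^6 β3 + 40α3^4 β3^2 + 32α3^5 - 16α3^2 β3^3 - 64α3^3 β3 + β3^4 + 24α3 β3^2 + 24α3^2 - 8β3 = 0, then a3 = 2α3^3 - 3α3β3 + 3 and b3 = β3^3 - 6α3β3 + 6 satisfy the equation of the curve K3: 8a3^8 - 32a3^6 b3 + 40a3^4 b3^2 + 64a3^5 - 16a3^2 b3^3 - 128a3^3 b3 + b3^4 + 48a3 b3^2 + 96a3^2 - 32b3 - 24 = 0. -/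
theorem stmt_16 (α3 β3 : ℚ)
    (hK1 : 8*α3^8 - 32*α3^6*β3 + 40*α3^4*β3^2 + 32*α3^5 - 16*α3^2*β3^3
      - 64*α3^3*β3 + β3^4 + 24*α3*β3^2 + 24*α3^2 - 8*β3 = 0)
    (a3 b3 : ℚ) (ha3 : a3 = 2*α3^3 - 3*α3*β3 + 3)
    (hb3 : b3 = β3^3 - 6*α3*β3 + 6) :
    8*a3^8 - 32*a3^6*b3 + 40*a3^4*b3^2 + 64*a3^5 - 16*a3^2*b3^3
      - 128*a3^3*b3 + b3^4 + 48*a3*b3^2 + 96*a3^2 - 32*b3 - 24 = 0 := by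
  subst ha3 hb3
  linear_combination (256*α3^16 - 2048*α3^14*β3 + 2048*α3^13 + 6656*α3^12*β3^2
    - 12288*α3^11*β3 - 11264*α3^10*β3^3 + 5632*α3^10 + 28160*α3^9*β3^2
    + 10560*α3^8*β3^4 - 23040*α3^8*β3 - 30720*α3^7*β3^3 + 6144*α3^7
    - 5376*α3^6*β3^5 + 32256*α3^6*β3^2 + 16128*α3^5*β3^4 - 14336*α3^5*β3
    + 1344*α3^4*β3^6 - 17920*α3^4*β3^3 + 2208*α3^4 - 3584*α3^3*β3^5
    + 9088*α3^3*β3^2 - 128*α3^2*β3^7 + 3280*α3^2*β3^4 - 2112*α3^2*β3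
    + 240*α3*β3^6 - 1152*α3*β3^3 + 192*α3 + β3^8 - 112*β3^5 + 112*β3^2) * hK1
end

section
/- Under the map α3 → (z, w) given by z = β3/α3^2 - 1, y = 1/α3^3, w = 4(z-2)y - 2(3z^2 - 2z - 1): if (α3, β3) is a rational point on K1 (8α3^8 - 32α3^6 β3 + 40α3^4 β3^2 + 32α3^5 - 16α3^2 β3^3 - 64α3^3 β3 + β3^4 + 24α3 β3^2 + 24α3^2 - 8β3 = 0) with α3 ≠ 0, then (z, w) satisfies w^2 = 2z(z^4 + 4z^3 - 2z^2 + 4z + 1). -/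
theorem stmt_17 (α3 β3 : ℚ) (hα3 : α3 ≠ 0)
    (hK1 : 8*α3^8 - 32*α3^6*β3 + 40*α3^4*β3^2 + 32*α3^5 - 16*α3^2*β3^3
      - 64*α3^3*β3 + β3^4 + 24*α3*β3^2 + 24*α3^2 - 8*β3 = 0)
    (z y w : ℚ) (hz : z = β3/α3^2 - 1) (hy : y = 1/α3^3)
    (hw : w = 4*(z - 2)*y - 2*(3*z^2 - 2*z - 1)) :
    w^2 = 2*z*(z^4 + 4*z^3 - 2*z^2 + 4*z + 1) := by
  subst hz hy hw
  have h10 : α3^10 ≠ 0 := pow_ne_zero _ hα3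
  have h3 : α3^3 ≠ 0 := pow_ne_zero _ hα3
  have h2 : α3^2 ≠ 0 := pow_ne_zero _ hα3
  field_simp
  linear_combination (6*α3^2 - 2*β3) * hK1
end
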